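/- Let f : X → Y be a continuous surjection between compact Hausdorff spaces. Then f is semi-open if and only if the induced map 2^f : 2^X → 2^Y, K ↦ f[K], is semi-open. -/

import Mathlib

/-- The hyperspace `2^X` of all nonempty closed subsets of `X`. -/
def Hyper (X : Type*) [TopologicalSpace X] : Type _ := {K : Set X // IsClosed K ∧ K.Nonempty}

/-- The Vietoris topology on the hyperspace, generated by the subbasic sets
`{K | K ⊆ U}` and `{K | K ∩ U ≠ ∅}` for `U` open. -/
instance Hyper.instTopologicalSpace (X : Type*) [TopologicalSpace X] :
    TopologicalSpace (Hyper X) :=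
  TopologicalSpace.generateFrom
    ({S | ∃ U : Set X, IsOpen U ∧ S = {K : Hyper X | K.1 ⊆ U}} ∪
     {S | ∃ U : Set X, IsOpen U ∧ S = {K : Hyper X | (K.1 ∩ U).Nonempty}})

/-- The induced map `2^f : 2^X → 2^Y`, `K ↦ f[K]`.  (For closed subsets of a compact
space and continuous `f` into a Hausdorff space the image `f[K]` is closed, so taking
the closure below is redundant and this is indeed `K ↦ f[K]`.) -/
def hyperMap {X Y : Type*} [TopologicalSpace X] [TopologicalSpace Y] (f : X → Y) :
    Hyper X → Hyper Y :=
  fun K => ⟨closure (f '' K.1), isClosed_closure, (K.2.2.image f).closure⟩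

/-- A continuous surjection `g : A → B` is *semi-open* if for every nonempty open set
`U ⊆ A`, the interior of the image `g '' U` is nonempty. -/
def SemiOpen {A B : Type*} [TopologicalSpace A] [TopologicalSpace B] (g : A → B) : Prop :=
  ∀ U : Set A, IsOpen U → U.Nonempty → (interior (g '' U)).Nonempty

open Set TopologicalSpace

/-- Inserting a point into a member of the hyperspace. -/
def hyperInsert {Y : Type*} [TopologicalSpace Y] [T1Space Y] (y : Y) (L : Hyper Y) : Hyper Y :=
  ⟨insert y L.1, by rw [Set.insert_eq]; exact isClosed_singleton.union L.2.1,
    Set.insert_nonempty _ _⟩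

lemma isOpen_hyper_subsets {X : Type*} [TopologicalSpace X] {U : Set X} (hU : IsOpen U) :
    IsOpen {K : Hyper X | K.1 ⊆ U} :=
  TopologicalSpace.GenerateOpen.basic _ (Or.inl ⟨U, hU, rfl⟩)

lemma isOpen_hyper_meets {X : Type*} [TopologicalSpace X] {U : Set X} (hU : IsOpen U) :
    IsOpen {K : Hyper X | (K.1 ∩ U).Nonempty} :=
  TopologicalSpace.GenerateOpen.basic _ (Or.inr ⟨U, hU, rfl⟩)

/-- Key lemma for the "only if" direction: if `L` belongs to an open subset `V` of the
hyperspace, there is an open `W ⊇ L` such that inserting any point of `W` into `L`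
keeps it in `V`. -/
lemma exists_insert_open {Y : Type*} [TopologicalSpace Y] [T1Space Y] {V : Set (Hyper Y)}
    (hV : IsOpen V) (L : Hyper Y) (hL : L ∈ V) :
    ∃ W : Set Y, IsOpen W ∧ L.1 ⊆ W ∧ ∀ y ∈ W, hyperInsert y L ∈ V := by
  have hV' : TopologicalSpace.GenerateOpen _ V := hV
  clear hV
  revert hL
  induction hV' with
  | basic s hs =>
    intro hL
    rcases hs with ⟨U, hU, rfl⟩ | ⟨U, hU, rfl⟩
    · exact ⟨U, hU, hL, fun y hy => Set.insert_subset hy hL⟩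
    · refine ⟨Set.univ, isOpen_univ, Set.subset_univ _, fun y _ => ?_⟩
      exact hL.mono (Set.inter_subset_inter_left _ (Set.subset_insert _ _))
  | univ => exact fun _ => ⟨Set.univ, isOpen_univ, Set.subset_univ _, fun y _ => Set.mem_univ _⟩
  | inter s t hs ht ihs iht =>
    intro hL
    obtain ⟨W1, hW1, hLW1, h1⟩ := ihs hL.1
    obtain ⟨W2, hW2, hLW2, h2⟩ := iht hL.2
    exact ⟨W1 ∩ W2, hW1.inter hW2, Set.subset_inter hLW1 hLW2,
      fun y hy => ⟨h1 y hy.1, h2 y hy.2⟩⟩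
  | sUnion S hS ih =>
    intro hL
    obtain ⟨s, hsS, hLs⟩ := hL
    obtain ⟨W, hW, hLW, h⟩ := ih s hsS hLs
    exact ⟨W, hW, hLW, fun y hy => ⟨s, hsS, h y hy⟩⟩

/-- Key lemma for the "if" direction: every open neighborhood of `K` in the hyperspace
contains a basic Vietoris neighborhood of `K`. -/
lemma exists_basic_subset {X : Type*} [TopologicalSpace X] {𝒰 : Set (Hyper X)}
    (h𝒰 : IsOpen 𝒰) (K : Hyper X) (hK : K ∈ 𝒰) :
    ∃ (W : Set X) (G : Set (Set X)), IsOpen W ∧ K.1 ⊆ W ∧ G.Finite ∧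
      (∀ V ∈ G, IsOpen V ∧ (K.1 ∩ V).Nonempty) ∧
      {M : Hyper X | M.1 ⊆ W ∧ ∀ V ∈ G, (M.1 ∩ V).Nonempty} ⊆ 𝒰 := by
  have h' : TopologicalSpace.GenerateOpen _ 𝒰 := h𝒰
  clear h𝒰
  revert hK
  induction h' with
  | basic s hs =>
    intro hK
    rcases hs with ⟨U, hU, rfl⟩ | ⟨U, hU, rfl⟩
    · exact ⟨U, ∅, hU, hK, Set.finite_empty, by simp, fun M hM => hM.1⟩
    · exact ⟨Set.univ, {U}, isOpen_univ, Set.subset_univ _, Set.finite_singleton _,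
        by simpa using ⟨hU, hK⟩, fun M hM => hM.2 U rfl⟩
  | univ =>
    exact fun _ => ⟨Set.univ, ∅, isOpen_univ, Set.subset_univ _, Set.finite_empty, by simp,
      fun M _ => Set.mem_univ M⟩
  | inter s t hs ht ihs iht =>
    intro hK
    obtain ⟨W1, G1, ho1, hs1, hf1, hg1, hsub1⟩ := ihs hK.1
    obtain ⟨W2, G2, ho2, hs2, hf2, hg2, hsub2⟩ := iht hK.2
    exact ⟨W1 ∩ W2, G1 ∪ G2, ho1.inter ho2, Set.subset_inter hs1 hs2, hf1.union hf2,
      fun V hV => hV.elim (hg1 V) (hg2 V),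
      fun M hM => ⟨hsub1 ⟨hM.1.trans Set.inter_subset_left, fun V hV => hM.2 V (Or.inl hV)⟩,
                   hsub2 ⟨hM.1.trans Set.inter_subset_right, fun V hV => hM.2 V (Or.inr hV)⟩⟩⟩
  | sUnion S hS ih =>
    intro hK
    obtain ⟨s, hsS, hKs⟩ := hK
    obtain ⟨W, G, ho, hsW, hfin, hg, hsub⟩ := ih s hsS hKs
    exact ⟨W, G, ho, hsW, hfin, hg, fun M hM => ⟨s, hsS, hsub hM⟩⟩

/-- Theorem 4. A continuous surjection `f : X → Y` of compact Hausdorff spaces is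
semi-open iff the induced map `2^f : 2^X → 2^Y` is semi-open. -/
theorem semiOpen_iff_semiOpen_hyperMap
    {X Y : Type*} [TopologicalSpace X] [CompactSpace X] [T2Space X]
    [TopologicalSpace Y] [CompactSpace Y] [T2Space Y]
    {f : X → Y} (hf : Continuous f) (hsurj : Function.Surjective f) :
    SemiOpen f ↔ SemiOpen (hyperMap f) := by
  constructor
  · -- f semi-open → 2^f semi-open
    intro hsemi 𝒰 h𝒰 ⟨K₀, hK₀⟩
    obtain ⟨W, G, hWopen, hK₀W, hGfin, hG, hQsub⟩ := exists_basic_subset h𝒰 K₀ hK₀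
    set 𝒢 : Set (Set X) := insert W G with h𝒢
    have hfinι : Finite ↥𝒢 := (hGfin.insert W).to_subtype
    have hneι : Nonempty ↥𝒢 := ⟨⟨W, Set.mem_insert _ _⟩⟩
    -- pick a point of K₀ in each member of 𝒢 (each one also lies in W)
    have hx : ∀ i : ↥𝒢, ∃ x, x ∈ K₀.1 ∧ x ∈ (i : Set X) ∩ W := by
      rintro ⟨V, hV⟩
      rcases hV with rfl | hV
      · obtain ⟨x, hx⟩ := K₀.2.2
        exact ⟨x, hx, hK₀W hx, hK₀W hx⟩
      · obtain ⟨x, hx1, hx2⟩ := (hG V hV).2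
        exact ⟨x, hx1, hx2, hK₀W hx1⟩
    choose x hxK hxVW using hx
    -- each member of 𝒢 is open, intersected with W
    have hVWopen : ∀ i : ↥𝒢, IsOpen ((i : Set X) ∩ W) := by
      rintro ⟨V, hV⟩
      rcases hV with rfl | hV
      · exact hWopen.inter hWopen
      · exact (hG V hV).1.inter hWopen
    -- shrink: closed neighborhoods inside V ∩ W
    have hO : ∀ i : ↥𝒢, ∃ O : Set X, IsOpen O ∧ x i ∈ O ∧ closure O ⊆ (i : Set X) ∩ W := by
      intro i
      obtain ⟨O, hO1, hO2, hO3⟩ := normal_exists_closure_subset isClosed_singleton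
        (hVWopen i) (Set.singleton_subset_iff.2 (hxVW i))
      exact ⟨O, hO1, hO2 rfl, hO3⟩
    choose O hOopen hxO hOcl using hO
    -- f semi-open: nonempty open sets inside images
    set Wi : ↥𝒢 → Set Y := fun i => interior (f '' O i) with hWi
    have hWiopen : ∀ i, IsOpen (Wi i) := fun i => isOpen_interior
    have hWine : ∀ i, (Wi i).Nonempty := fun i => hsemi (O i) (hOopen i) ⟨x i, hxO i⟩
    choose y hy using hWine
    -- the open target set
    set T : Set (Hyper Y) :=
      {M : Hyper Y | M.1 ⊆ ⋃ i, Wi i} ∩ ⋂ i, {M : Hyper Y | (M.1 ∩ Wi i).Nonempty} with hT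
    have hTopen : IsOpen T := by
      refine (isOpen_hyper_subsets (isOpen_iUnion hWiopen)).inter
        (isOpen_iInter_of_finite fun i => isOpen_hyper_meets (hWiopen i))
    have hTne : T.Nonempty := by
      refine ⟨⟨Set.range y, (Set.finite_range y).isClosed, Set.range_nonempty y⟩, ?_, ?_⟩
      · rintro _ ⟨i, rfl⟩
        exact Set.mem_iUnion.2 ⟨i, hy i⟩
      · exact Set.mem_iInter.2 fun i => ⟨y i, ⟨i, rfl⟩, hy i⟩
    -- T is contained in the image
    have hTsub : T ⊆ hyperMap f '' 𝒰 := by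
      rintro M ⟨hM1, hM2⟩
      have hM2' : ∀ i, (M.1 ∩ Wi i).Nonempty := fun i => Set.mem_iInter.1 hM2 i
      -- construct the preimage
      set K : Set X := ⋃ i, closure (f ⁻¹' M.1 ∩ O i) with hK
      have hKcl : IsClosed K := isClosed_iUnion_of_finite fun i => isClosed_closure
      have hsub1 : ∀ i, closure (f ⁻¹' M.1 ∩ O i) ⊆ (i : Set X) ∩ W := fun i =>
        (closure_mono Set.inter_subset_right).trans (hOcl i)
      have himg : f '' K = M.1 := by
        apply Set.Subset.antisymm
        · rw [hK, Set.image_iUnion]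
          refine Set.iUnion_subset fun i => ?_
          refine (image_closure_subset_closure_image hf).trans ?_
          have hsm : f '' (f ⁻¹' M.1 ∩ O i) ⊆ M.1 :=
            (Set.image_mono (f := f) Set.inter_subset_left).trans (Set.image_preimage_subset f M.1)
          exact (closure_mono hsm).trans M.2.1.closure_eq.subset
        · intro z hz
          obtain ⟨i, hzi⟩ := Set.mem_iUnion.1 (hM1 hz)
          obtain ⟨x', hx'O, hfx'⟩ := interior_subset hzi
          exact ⟨x', Set.mem_iUnion.2 ⟨i, subset_closure ⟨by simp [hfx', hz], hx'O⟩⟩, hfx'⟩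
      have hKne : K.Nonempty := by
        obtain ⟨z, hz⟩ := M.2.2
        rw [← himg] at hz
        obtain ⟨x', hx'K, -⟩ := hz
        exact ⟨x', hx'K⟩
      refine ⟨⟨K, hKcl, hKne⟩, hQsub ⟨?_, ?_⟩, ?_⟩
      · exact Set.iUnion_subset fun i => (hsub1 i).trans Set.inter_subset_right
      · intro V hV
        have hi : V ∈ 𝒢 := Set.mem_insert_of_mem _ hV
        obtain ⟨z, hzM, hzW⟩ := hM2' ⟨V, hi⟩
        obtain ⟨x', hx'O, hfx'⟩ := interior_subset hzW
        refine ⟨x', ⟨Set.mem_iUnion.2 ⟨⟨V, hi⟩, subset_closure ⟨by simp [hfx', hzM], hx'O⟩⟩, ?_⟩⟩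
        exact ((subset_closure.trans (hOcl ⟨V, hi⟩)) hx'O).1
      · exact Subtype.ext (by simp only [hyperMap, himg, M.2.1.closure_eq])
    exact ⟨hTne.choose, interior_maximal hTsub hTopen hTne.choose_spec⟩
  · -- 2^f semi-open → f semi-open
    intro hsemi U hU ⟨x₀, hx₀⟩
    have hSopen : IsOpen {K : Hyper X | K.1 ⊆ U} := isOpen_hyper_subsets hU
    have hSne : Set.Nonempty {K : Hyper X | K.1 ⊆ U} :=
      ⟨⟨{x₀}, isClosed_singleton, Set.singleton_nonempty _⟩, Set.singleton_subset_iff.2 hx₀⟩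
    obtain ⟨L, hL⟩ := hsemi _ hSopen hSne
    obtain ⟨W, hWopen, hLW, hins⟩ := exists_insert_open isOpen_interior L hL
    obtain ⟨y₀, hy₀⟩ := L.2.2
    have hWsub : W ⊆ f '' U := by
      intro z hz
      obtain ⟨K, hKS, hKeq⟩ := interior_subset (hins z hz)
      have hcl : closure (f '' K.1) = f '' K.1 :=
        ((K.2.1.isCompact.image hf).isClosed).closure_eq
      have hzmem : z ∈ closure (f '' K.1) := by
        have := congrArg Subtype.val hKeq
        simp only [hyperMap] at this
        rw [this]
        exact Set.mem_insert _ _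
      rw [hcl] at hzmem
      obtain ⟨x', hx'K, hfx'⟩ := hzmem
      exact ⟨x', hKS hx'K, hfx'⟩
    exact ⟨y₀, interior_maximal hWsub hWopen (hLW hy₀)⟩
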